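/- Let q ≥ 2 be a prime power and m > r ≥ 1 with r | m. Then ∑_{i=0}^{m-1} ⌈(q−1)(q^{m−1} − q^{r−1})/q^i⌉ = q^m − q^r. -/

import Mathlib

private lemma geom_aux (q : ℕ) (hq : 2 ≤ q) : ∀ n, ∑ j ∈ Finset.range n, (q - 1) * q ^ j = q ^ n - 1 := by
  intro n
  induction n with
  | zero => simp
  | succ n ih =>
    rw [Finset.sum_range_succ, ih]
    have h1 : 1 ≤ q ^ n := Nat.one_le_pow _ _ (by omega)
    have hq' : q - 1 + 1 = q := by omega
    have h3 : (q - 1) * q ^ n + q ^ n = q ^ (n + 1) := by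
      calc (q - 1) * q ^ n + q ^ n = (q - 1 + 1) * q ^ n := by ring
      _ = q * q ^ n := by rw [hq']
      _ = q ^ (n + 1) := (pow_succ' q n).symm
    omega

theorem stmt_5 (q r m : ℕ) (hq : IsPrimePow q) (hr : 1 ≤ r) (hrm : r < m) (hdvd : r ∣ m) :
    ∑ i ∈ Finset.range m, ((q - 1) * (q ^ (m - 1) - q ^ (r - 1)) + q ^ i - 1) / q ^ i
      = q ^ m - q ^ r := by
  have hq2 : 2 ≤ q := hq.two_le
  have hq1 : 1 ≤ q := by omega
  -- termwise value
  have hterm : ∀ i ∈ Finset.range m,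
      ((q - 1) * (q ^ (m - 1) - q ^ (r - 1)) + q ^ i - 1) / q ^ i
        + (if i < r then (q - 1) * q ^ (r - 1 - i) else 0)
      = (q - 1) * q ^ (m - 1 - i) := by
    intro i hi
    rw [Finset.mem_range] at hi
    have hPpos : 0 < q ^ i := Nat.pow_pos (by omega)
    by_cases hir : i < r
    · -- divisible case
      have e1 : q ^ i * q ^ (m - 1 - i) = q ^ (m - 1) := by
        rw [← pow_add]; congr 1; omega
      have e2 : q ^ i * q ^ (r - 1 - i) = q ^ (r - 1) := by
        rw [← pow_add]; congr 1; omega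
      have e3 : q ^ (r - 1 - i) ≤ q ^ (m - 1 - i) := pow_le_pow_right₀ hq1 (by omega)
      have key : (q - 1) * (q ^ (m - 1) - q ^ (r - 1))
          = q ^ i * ((q - 1) * (q ^ (m - 1 - i) - q ^ (r - 1 - i))) := by
        rw [← e1, ← e2, Nat.mul_sub, Nat.mul_sub, Nat.mul_sub]
        congr 1 <;> ring
      rw [key]
      have hsplit : (q ^ i * ((q - 1) * (q ^ (m - 1 - i) - q ^ (r - 1 - i))) + q ^ i - 1)
          = q ^ i * ((q - 1) * (q ^ (m - 1 - i) - q ^ (r - 1 - i))) + (q ^ i - 1) := by omega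
      rw [hsplit, Nat.mul_add_div hPpos, Nat.div_eq_of_lt (by omega)]
      simp only [if_pos hir]
      rw [add_zero, ← Nat.mul_add, Nat.sub_add_cancel e3]
    · -- non-divisible case: i ≥ r
      have e1 : q ^ i * q ^ (m - 1 - i) = q ^ (m - 1) := by
        rw [← pow_add]; congr 1; omega
      have e3 : q ^ (r - 1) ≤ q ^ (m - 1) := pow_le_pow_right₀ hq1 (by omega)
      have e2 : (q - 1) * q ^ (r - 1) < q ^ i := by
        have hp : 0 < q ^ (r - 1) := Nat.pow_pos (by omega)
        calc (q - 1) * q ^ (r - 1) < q * q ^ (r - 1) :=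
              (Nat.mul_lt_mul_right hp).mpr (by omega)
        _ = q ^ (r - 1 + 1) := (pow_succ' q _).symm
        _ = q ^ r := by rw [Nat.sub_add_cancel hr]
        _ ≤ q ^ i := pow_le_pow_right₀ hq1 (by omega)
      have key : (q - 1) * q ^ (m - 1) = q ^ i * ((q - 1) * q ^ (m - 1 - i)) := by
        rw [← e1]; ring
      have hsub : (q - 1) * (q ^ (m - 1) - q ^ (r - 1))
          = (q - 1) * q ^ (m - 1) - (q - 1) * q ^ (r - 1) := Nat.mul_sub _ _ _
      have hnum : (q - 1) * (q ^ (m - 1) - q ^ (r - 1)) + q ^ i - 1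
          = q ^ i * ((q - 1) * q ^ (m - 1 - i)) + (q ^ i - 1 - (q - 1) * q ^ (r - 1)) := by
        have hle : (q - 1) * q ^ (r - 1) ≤ (q - 1) * q ^ (m - 1) :=
          Nat.mul_le_mul_left _ e3
        omega
      rw [hnum, Nat.mul_add_div hPpos, Nat.div_eq_of_lt (by omega)]
      simp [hir]
  have hsum : (∑ i ∈ Finset.range m, ((q - 1) * (q ^ (m - 1) - q ^ (r - 1)) + q ^ i - 1) / q ^ i)
      + (∑ i ∈ Finset.range m, if i < r then (q - 1) * q ^ (r - 1 - i) else 0)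
      = ∑ i ∈ Finset.range m, (q - 1) * q ^ (m - 1 - i) := by
    rw [← Finset.sum_add_distrib]
    exact Finset.sum_congr rfl hterm
  have hT : (∑ i ∈ Finset.range m, if i < r then (q - 1) * q ^ (r - 1 - i) else 0)
      = q ^ r - 1 := by
    rw [← Finset.sum_subset (Finset.range_subset_range.mpr (le_of_lt hrm))
        (by intro x hx hx'; rw [Finset.mem_range] at hx'; simp [hx'])]
    have heq : ∀ i ∈ Finset.range r, (if i < r then (q - 1) * q ^ (r - 1 - i) else 0)
        = (q - 1) * q ^ (r - 1 - i) := by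
      intro i hi; rw [Finset.mem_range] at hi; simp [hi]
    rw [Finset.sum_congr rfl heq, Finset.sum_range_reflect (fun j => (q - 1) * q ^ j) r,
      geom_aux q hq2]
  have hS : ∑ i ∈ Finset.range m, (q - 1) * q ^ (m - 1 - i) = q ^ m - 1 := by
    rw [Finset.sum_range_reflect (fun j => (q - 1) * q ^ j) m, geom_aux q hq2]
  rw [hT, hS] at hsum
  have hqr : q ^ r ≤ q ^ m := pow_le_pow_right₀ hq1 (le_of_lt hrm)
  have h1 : 1 ≤ q ^ r := Nat.one_le_pow _ _ (by omega)
  omega
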